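/- Let q be a positive composite number and let p be a prime dividing q. Then the binomial coefficient C(q + p - 1, q - 1) is not congruent to 0 modulo q (even though q does not divide q + p). -/

import Mathlib

theorem composite_binom_not_cong_zero (q p : ℕ) (hq : 1 < q) (hq' : ¬ q.Prime)
    (hp : p.Prime) (hpq : p ∣ q) :
    ¬ ((q + p - 1).choose (q - 1) ≡ 0 [MOD q]) ∧ ¬ q ∣ (q + p) := by
  have hq0 : q ≠ 0 := by omega
  have hp1 := hp.one_lt
  have hplt : p < q := by
    rcases (Nat.le_of_dvd (by omega) hpq).lt_or_eq with h | h
    · exact h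
    · exact absurd (h ▸ hp) hq'
  constructor
  · rw [Nat.modEq_zero_iff_dvd]
    intro hdvd
    have hsymm : (q + p - 1).choose (q - 1) = (q + p - 1).choose p := by
      have h1 : q + p - 1 - p = q - 1 := by omega
      rw [← h1, Nat.choose_symm (by omega)]
    rw [hsymm] at hdvd
    set C := (q + p - 1).choose p with hC
    have hC0 : C ≠ 0 := (Nat.choose_pos (show p ≤ q + p - 1 by omega)).ne'
    have key : (p.factorial * C).factorization p = q.factorization p := by
      rw [← Nat.descFactorial_eq_factorial_mul_choose,
        Nat.descFactorial_eq_prod_range,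
        Nat.factorization_prod (fun i hi => by
          simp only [Finset.mem_range] at hi
          omega : ∀ i ∈ Finset.range p, q + p - 1 - i ≠ 0)]
      rw [Finsupp.finset_sum_apply]
      rw [Finset.sum_eq_single (p - 1)]
      · have he : q + p - 1 - (p - 1) = q := by omega
        rw [he]
      · intro i hi hne
        simp only [Finset.mem_range] at hi
        apply Nat.factorization_eq_zero_of_not_dvd
        have hrep : q + p - 1 - i = q + (p - 1 - i) := by omega
        rw [hrep]
        intro hdvd'
        have h2 : p ∣ (p - 1 - i) := (Nat.dvd_add_right hpq).mp hdvd'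
        have h3 := Nat.le_of_dvd (by omega) h2
        omega
      · intro h; simp at h; omega
    have hfac1 : (p.factorial).factorization p = 1 := by
      rw [← Nat.mul_factorial_pred hp.ne_zero,
        Nat.factorization_mul (by omega) (Nat.factorial_ne_zero _),
        Finsupp.add_apply, Nat.Prime.factorization_self hp,
        Nat.factorization_eq_zero_of_not_dvd (by
          rw [hp.dvd_factorial]; omega)]
    rw [Nat.factorization_mul (Nat.factorial_ne_zero _) hC0, Finsupp.add_apply, hfac1] at key
    have hvq : 1 ≤ q.factorization p := Nat.Prime.factorization_pos_of_dvd hp hq0 hpq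
    have hle : q.factorization p ≤ C.factorization p :=
      (Nat.factorization_le_iff_dvd hq0 hC0).mpr hdvd p
    omega
  · intro h
    have h1 : q ∣ p := (Nat.dvd_add_right (dvd_refl q)).mp h
    have := Nat.le_of_dvd hp.pos h1
    omega
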